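/- If 0 < d₋ < 1 < d₊ satisfy 1/d₋² + 2d₋ = 1/d₊² + 2d₊ and F = d₋^(−3/2), then d₊³ = (((F + √(F² + 8))/4)³)·F. -/
import Mathlib


/-- If 0 < d₋ < 1 < d₊ are conjugate depths and F = d₋^(−3/2) is the Froude
number, then d₊³ = (((F + √(F² + 8))/4)³)·F. -/
theorem theta_of_froude (dm dp F : ℝ) (h0 : 0 < dm) (h1 : dm < 1) (h2 : 1 < dp)
    (heq : 1 / dm ^ 2 + 2 * dm = 1 / dp ^ 2 + 2 * dp)
    (hF : F = dm ^ (-(3 : ℝ) / 2)) :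
    dp ^ 3 = ((F + Real.sqrt (F ^ 2 + 8)) / 4) ^ 3 * F := by
  have hdp : (0:ℝ) < dp := lt_trans one_pos h2
  set t := Real.sqrt dm with ht
  have htpos : 0 < t := Real.sqrt_pos.mpr h0
  have ht2 : t ^ 2 = dm := Real.sq_sqrt h0.le
  have ht3 : t ^ 3 = dm ^ ((3:ℝ)/2) := by
    rw [ht, Real.sqrt_eq_rpow, ← Real.rpow_natCast (dm ^ ((1:ℝ)/2)) 3,
      ← Real.rpow_mul h0.le]
    norm_num
  have hFt : F * t ^ 3 = 1 := by
    rw [hF, ht3, ← Real.rpow_add h0]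
    norm_num
  have hFpos : 0 < F := by
    rw [hF]; exact Real.rpow_pos_of_pos h0 _
  -- conjugate depth relation
  have heq' : dp ^ 2 + 2 * dm ^ 3 * dp ^ 2 = dm ^ 2 + 2 * dp ^ 3 * dm ^ 2 := by
    field_simp at heq
    linarith
  have hkey : (dp - dm) * ((dp + dm) - 2 * dm ^ 2 * dp ^ 2) = 0 := by
    linear_combination heq'
  have hsum : dp + dm = 2 * dm ^ 2 * dp ^ 2 := by
    rcases mul_eq_zero.mp hkey with h | h
    · nlinarith
    · linarith
  have hc2 : (16 * dp ^ 2 * dm - 8 * dp * t * F - 8) * t ^ 2 = 0 := by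
    linear_combination (-8 * dp) * hFt + (-8) * hsum + (16 * dp ^ 2 * dm - 8) * ht2
  have hc' : 16 * dp ^ 2 * dm - 8 * dp * t * F = 8 := by
    rcases mul_eq_zero.mp hc2 with h | h
    · linarith
    · exact absurd h (by positivity)
  -- 4 dp t - F is nonneg
  have hnn : 0 ≤ 4 * dp * t - F := by
    nlinarith [hc', ht2, hFpos, mul_pos hdp htpos]
  have hsq : F ^ 2 + 8 = (4 * dp * t - F) ^ 2 := by
    linear_combination -hc' - 16 * dp ^ 2 * ht2
  have hs : Real.sqrt (F ^ 2 + 8) = 4 * dp * t - F := by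
    rw [hsq, Real.sqrt_sq hnn]
  rw [hs]
  have hA : (F + (4 * dp * t - F)) / 4 = dp * t := by ring
  rw [hA]
  linear_combination (-dp ^ 3) * hFt
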